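/- Let n ≥ 1 and let f₀, f₁, …, f_{k−1} : (Fin n → Bool) → (Fin n → Bool) be functions each of which has a pass-through coordinate, and let f = f_{k−1} ∘ f_{k−2} ∘ ⋯ ∘ f₀. Then there is no x ∈ (Fin n → Bool) such that the 2^n iterates x, f(x), f²(x), …, f^{2^n−1}(x) are pairwise distinct; that is, f is not a 2^n-counter. -/

import Mathlib

/-- `j` is a pass-through coordinate of `f`: `f` copies coordinate `j` through,
and no other output coordinate depends on input coordinate `j`. -/
def PassThrough {n : ℕ} (f : (Fin n → Bool) → (Fin n → Bool)) (j : Fin n) : Prop :=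
  (∀ x, f x j = x j) ∧
  ∀ l : Fin n, l ≠ j → ∀ x x' : Fin n → Bool,
    (∀ i : Fin n, i ≠ j → x i = x' i) → f x l = f x' l

/-- The composition `f_{k-1} ∘ f_{k-2} ∘ ⋯ ∘ f₀` of a finite family of self-maps
(`f 0` is applied first). -/
def compFamily {α : Type*} {k : ℕ} (f : Fin k → α → α) : α → α :=
  (List.ofFn f).foldl (fun acc g => g ∘ acc) id

namespace NC

variable {n : ℕ}

def flip (j : Fin n) (x : Fin n → Bool) : Fin n → Bool := Function.update x j (!x j)

lemma flip_self (j : Fin n) (x) : flip j x j = !x j := Function.update_self _ _ _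

lemma flip_ne' (j l : Fin n) (h : l ≠ j) (x) : flip j x l = x l := Function.update_of_ne h _ _

lemma flip_flip (j : Fin n) (x) : flip j (flip j x) = x := by
  funext i
  by_cases h : i = j
  · subst h; simp [flip]
  · simp [flip, Function.update_of_ne h]

lemma pass_flip {f : (Fin n → Bool) → Fin n → Bool} {j} (hf : PassThrough f j) (x) :
    f (flip j x) = flip j (f x) := by
  funext l
  by_cases h : l = j
  · subst h; rw [hf.1, flip_self, flip_self, hf.1]
  · rw [flip_ne' _ _ h]
    exact hf.2 l h _ _ (fun i hi => flip_ne' _ _ hi x)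

lemma card_image_le_of_not_surj {g : (Fin n → Bool) → Fin n → Bool} {j}
    (hg : PassThrough g j) (hns : ¬ Function.Surjective g) :
    (Finset.univ.image g).card ≤ 2 ^ n - 2 := by
  obtain ⟨z, hz⟩ := not_forall.mp hns
  have hz1 : z ∉ Finset.univ.image g := by
    simp only [Finset.mem_image]
    rintro ⟨w, -, rfl⟩
    exact hz ⟨w, rfl⟩
  have hz2 : flip j z ∉ Finset.univ.image g := by
    simp only [Finset.mem_image]
    rintro ⟨w, -, hw⟩
    exact hz ⟨flip j w, by rw [pass_flip hg, hw, flip_flip]⟩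
  have hne : z ≠ flip j z := by
    intro h
    have := congrFun h j
    rw [flip_self] at this
    exact Bool.not_ne_self _ this.symm
  have hsub : ({z, flip j z} : Finset _) ⊆ (Finset.univ.image g)ᶜ := by
    intro w hw
    simp only [Finset.mem_insert, Finset.mem_singleton] at hw
    rw [Finset.mem_compl]
    rcases hw with rfl | rfl
    · exact hz1
    · exact hz2
  have h2 : 2 ≤ ((Finset.univ.image g)ᶜ).card := by
    calc 2 = ({z, flip j z} : Finset _).card := (Finset.card_pair hne).symm
    _ ≤ _ := Finset.card_le_card hsub
  have hcompl := Finset.card_compl (Finset.univ.image g)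
  have hcard : Fintype.card (Fin n → Bool) = 2 ^ n := by
    simp [Fintype.card_fun]
  omega


lemma sign_eq_one {g : (Fin n → Bool) → Fin n → Bool} (hbij : Function.Bijective g)
    {j : Fin n} (hg : PassThrough g j) :
    Equiv.Perm.sign (Equiv.ofBijective g hbij) = 1 := by
  set e := Equiv.funSplitAt j Bool with he
  have hsymm_j : ∀ (b : Bool) (y : {l // l ≠ j} → Bool), e.symm (b, y) j = b := by
    intro b y; simp [he, Equiv.funSplitAt, Equiv.piSplitAt]
  have hsymm_ne : ∀ (b : Bool) (y : {l // l ≠ j} → Bool) (l : Fin n) (h : l ≠ j),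
      e.symm (b, y) l = y ⟨l, h⟩ := by
    intro b y l h; simp [he, Equiv.funSplitAt, Equiv.piSplitAt, h]
  set γ0 : ({l // l ≠ j} → Bool) → ({l // l ≠ j} → Bool) :=
    fun y l => g (e.symm (false, y)) l.1 with hγ0
  have key : ∀ (b : Bool) (y : {l // l ≠ j} → Bool) (l : {l : Fin n // l ≠ j}),
      g (e.symm (b, y)) l.1 = γ0 y l := by
    intro b y l
    exact hg.2 l.1 l.2 _ _ (fun i hi => by rw [hsymm_ne b y i hi, hsymm_ne false y i hi])
  have hγinj : Function.Injective γ0 := by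
    intro y y' h
    have : g (e.symm (false, y)) = g (e.symm (false, y')) := by
      funext i
      by_cases hi : i = j
      · subst hi; rw [hg.1, hg.1, hsymm_j, hsymm_j]
      · rw [key false y ⟨i, hi⟩, key false y' ⟨i, hi⟩, h]
    have := e.symm.injective (hbij.1 this)
    exact (Prod.mk.injEq _ _ _ _).mp this |>.2
  set γ : Equiv.Perm ({l : Fin n // l ≠ j} → Bool) :=
    Equiv.ofBijective γ0 (Finite.injective_iff_bijective.mp hγinj) with hγ
  have hconj : e.permCongr (Equiv.ofBijective g hbij) =
      Equiv.prodCongrRight (fun _ : Bool => γ) := by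
    apply Equiv.ext
    rintro ⟨b, y⟩
    rw [Equiv.permCongr_apply, Equiv.prodCongrRight_apply]
    have : (Equiv.ofBijective g hbij) (e.symm (b, y)) = g (e.symm (b, y)) := rfl
    rw [this]
    apply Prod.ext
    · show g (e.symm (b, y)) j = b
      rw [hg.1, hsymm_j]
    · funext l
      exact key b y l
  have hs := Equiv.Perm.sign_permCongr e (Equiv.ofBijective g hbij)
  rw [hconj, Equiv.Perm.sign_prodCongrRight] at hs
  rw [← hs]
  simp [Int.units_mul_self]


def comp' (L : List ((Fin n → Bool) → Fin n → Bool)) : (Fin n → Bool) → Fin n → Bool :=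
  L.foldl (fun acc g => g ∘ acc) id

lemma comp'_concat (L : List ((Fin n → Bool) → Fin n → Bool)) (g) :
    comp' (L ++ [g]) = g ∘ comp' L := by
  simp [comp', List.foldl_append]

lemma dichotomy (L : List ((Fin n → Bool) → Fin n → Bool))
    (hL : ∀ g ∈ L, ∃ j, PassThrough g j) :
    (Finset.univ.image (comp' L)).card ≤ 2 ^ n - 2 ∨
    ∃ e : Equiv.Perm (Fin n → Bool), ⇑e = comp' L ∧ Equiv.Perm.sign e = 1 := by
  induction L using List.reverseRecOn with
  | nil =>
    right
    exact ⟨1, by simp [comp'], map_one _⟩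
  | append_singleton L g ih =>
    obtain ⟨j, hj⟩ := hL g (by simp)
    rcases ih (fun g' hg' => hL g' (by simp [hg'])) with h | ⟨e, he, hsgn⟩
    · left
      rw [comp'_concat, ← Finset.image_image]
      calc ((Finset.univ.image (comp' L)).image g).card
          ≤ (Finset.univ.image (comp' L)).card := Finset.card_image_le
        _ ≤ 2 ^ n - 2 := h
    · by_cases hs : Function.Surjective g
      · right
        have hbij : Function.Bijective g := Finite.surjective_iff_bijective.mp hs
        refine ⟨e.trans (Equiv.ofBijective g hbij), ?_, ?_⟩
        · funext z
          show g (e z) = comp' (L ++ [g]) z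
          rw [comp'_concat, he]; rfl
        · have : e.trans (Equiv.ofBijective g hbij) = (Equiv.ofBijective g hbij) * e := rfl
          rw [this, map_mul, sign_eq_one hbij hj, hsgn, mul_one]
      · left
        have hsurj : Function.Surjective (comp' L) := by
          rw [← he]; exact e.surjective
        rw [comp'_concat, ← Finset.image_image,
          Finset.image_univ_of_surjective hsurj]
        exact card_image_le_of_not_surj hj hs


end NC

theorem no_maximal_counter_of_passThrough {n : ℕ} (hn : 1 ≤ n) {k : ℕ}
    (f : Fin k → (Fin n → Bool) → (Fin n → Bool))
    (hpass : ∀ i : Fin k, ∃ j : Fin n, PassThrough (f i) j) :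
    ¬ ∃ x : Fin n → Bool,
      Function.Injective (fun i : Fin (2 ^ n) => (compFamily f)^[i] x) := by
  rintro ⟨x, hinj⟩
  set F : (Fin n → Bool) → Fin n → Bool := compFamily f with hF
  have hF' : F = NC.comp' (List.ofFn f) := rfl
  have hcard : Fintype.card (Fin n → Bool) = 2 ^ n := by
    simp [Fintype.card_fun]
  have h2n : 2 ≤ 2 ^ n := by
    calc 2 = 2 ^ 1 := (pow_one 2).symm
    _ ≤ 2 ^ n := Nat.pow_le_pow_right (by norm_num) hn
  have hbijT : Function.Bijective (fun i : Fin (2 ^ n) => F^[i] x) := by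
    rw [Fintype.bijective_iff_injective_and_card]
    exact ⟨hinj, by simp [hcard]⟩
  set T : Fin (2 ^ n) ≃ (Fin n → Bool) := Equiv.ofBijective _ hbijT with hTdef
  have hT : ∀ i : Fin (2 ^ n), T i = F^[i.val] x := fun _ => rfl
  rcases NC.dichotomy (List.ofFn f) (by
      intro g hg
      obtain ⟨i, rfl⟩ := List.mem_ofFn.mp hg
      exact hpass i) with hle | ⟨e, he, hsgn⟩
  · -- the image of F contains the 2^n - 1 points T i for i ≠ 0
    have hsub : (Finset.univ.erase (0 : Fin (2 ^ n))).image T ⊆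
        Finset.univ.image (NC.comp' (List.ofFn f)) := by
      intro z hz
      obtain ⟨i, hi, rfl⟩ := Finset.mem_image.mp hz
      have hi0 : (i : ℕ) ≠ 0 := by
        intro h
        exact (Finset.mem_erase.mp hi).1 (Fin.ext h)
      refine Finset.mem_image.mpr ⟨F^[i.val - 1] x, Finset.mem_univ _, ?_⟩
      rw [← hF', hT]
      rw [← Function.iterate_succ_apply' F (i.val - 1) x]
      congr 1
      omega
    have h1 : ((Finset.univ.erase (0 : Fin (2 ^ n))).image T).card = 2 ^ n - 1 := by
      rw [Finset.card_image_of_injective _ T.injective,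
        Finset.card_erase_of_mem (Finset.mem_univ _), Finset.card_univ, Fintype.card_fin]
    have := Finset.card_le_card hsub
    omega
  · obtain ⟨m, hm⟩ : ∃ m, 2 ^ n = m + 1 := ⟨2 ^ n - 1, by omega⟩
    set T' : Fin (m + 1) ≃ (Fin n → Bool) := (finCongr hm).symm.trans T with hT'def
    have hT' : ∀ i : Fin (m + 1), T' i = F^[i.val] x := by
      intro i
      show T ((finCongr hm).symm i) = _
      rw [hT]
      rfl
    set s : Fin (m + 1) → Fin (m + 1) := fun i => T'.symm (e (T' i)) with hsdef
    have hsinj : Function.Injective s :=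
      T'.symm.injective.comp (e.injective.comp T'.injective)
    have hstep : ∀ y, e y = F y := fun y => by rw [he, hF']
    have hs_lt : ∀ i : Fin (m + 1), (i : ℕ) < m → s i = i + 1 := by
      intro i hi
      apply T'.injective
      rw [hsdef]
      show T' (T'.symm (e (T' i))) = T' (i + 1)
      rw [T'.apply_symm_apply, hT', hT', hstep, ← Function.iterate_succ_apply' F]
      congr 1
      rw [Fin.val_add_one_of_lt (Fin.lt_def.mpr (by simpa using hi))]
    have hs_last : s (Fin.last m) = 0 := by
      by_contra hne
      obtain ⟨w, hw⟩ : ∃ w : Fin (m + 1), s (Fin.last m) = w := ⟨_, rfl⟩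
      have hw0 : (w : ℕ) ≠ 0 := by
        intro h
        exact hne (hw.trans (Fin.ext h))
      have hwlt : (w : ℕ) - 1 < m := by omega
      set i : Fin (m + 1) := ⟨(w : ℕ) - 1, by omega⟩ with hidef
      have : s i = w := by
        rw [hs_lt i hwlt]
        apply Fin.ext
        rw [Fin.val_add_one_of_lt (Fin.lt_def.mpr (by simp [Fin.last, hidef]; omega))]
        simp [hidef]
        omega
      have : i = Fin.last m := hsinj (this.trans hw.symm)
      have := congrArg Fin.val this
      simp [hidef, Fin.last] at this
      omega
    have hs_all : ∀ i, s i = i + 1 := by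
      intro i
      by_cases hi : (i : ℕ) < m
      · exact hs_lt i hi
      · have : i = Fin.last m := Fin.ext (by simp [Fin.last]; omega)
        rw [this, hs_last, Fin.last_add_one]
    have hperm : e = T'.permCongr (finRotate (m + 1)) := by
      apply Equiv.ext
      intro z
      have : z = T' (T'.symm z) := (T'.apply_symm_apply z).symm
      rw [this, Equiv.permCongr_apply, T'.symm_apply_apply, finRotate_succ_apply]
      have := hs_all (T'.symm z)
      rw [hsdef] at this
      have := congrArg T' this
      rw [T'.apply_symm_apply] at this
      exact this
    have hmodd : Odd m := by
      have : (2 : ℕ) ∣ 2 ^ n := dvd_pow_self 2 (by omega)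
      obtain ⟨c, hc⟩ := this
      rw [Nat.odd_iff]
      omega
    rw [hperm, Equiv.Perm.sign_permCongr, sign_finRotate, Nat.add_sub_cancel, hmodd.neg_one_pow] at hsgn
    exact absurd hsgn (by decide)
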